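/- Let a_n(x) be the matrix coefficients in the expansion [[xz - 1, -z²],[0, xz]]·e^{xz} = Σ_{n≥0} a_n(x) z^n. Then the recursion diag(n³+3n²-n-3, n(n²+3n+2))·a_{n+3} + [[0, 3(n-1)],[0,0]]·a_{n+1} = x³·a_n holds for every n ≥ 0, where the diagonal matrix and the nilpotent matrix multiply a_{n+3} and a_{n+1} on the left. -/

import Mathlib

lemma deriv_quad_exp (x a b c : ℝ) :
    deriv (fun z : ℝ => Real.exp (x*z) * (a + b*z + c*z^2))
      = fun z : ℝ => Real.exp (x*z) * ((x*a+b) + (x*b+2*c)*z + (x*c)*z^2) := by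
  funext z
  have h1 : HasDerivAt (fun z : ℝ => Real.exp (x*z)) (Real.exp (x*z) * x) z := by
    simpa using ((hasDerivAt_id z).const_mul x).exp
  have h2 : HasDerivAt (fun z : ℝ => a + b*z + c*z^2) (b + c*(2*z)) z := by
    have := (((hasDerivAt_id z).const_mul b).const_add a).fun_add ((hasDerivAt_pow 2 z).const_mul c)
    simpa using this
  have := (h1.fun_mul h2).deriv
  rw [this]; ring

lemma key (x a b c : ℝ) : ∀ n : ℕ,
    iteratedDeriv n (fun z : ℝ => Real.exp (x*z) * (a + b*z + c*z^2)) 0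
      = a*x^n + n*b*x^(n-1) + n*(n-1)*c*x^(n-2) := by
  intro n
  induction n generalizing a b c with
  | zero => simp
  | succ n ih =>
    rw [iteratedDeriv_succ', deriv_quad_exp, ih]
    match n with
    | 0 => push_cast; ring
    | 1 => push_cast; ring_nf
    | (k+2) => push_cast; ring_nf

theorem stmt_19 (x : ℝ) (ψ : ℝ → Matrix (Fin 2) (Fin 2) ℝ)
    (hψ : ∀ z : ℝ, ψ z = Real.exp (x * z) • !![x * z - 1, -z ^ 2; 0, x * z])
    (a : ℕ → Matrix (Fin 2) (Fin 2) ℝ)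
    (ha : ∀ n : ℕ, a n = Matrix.of fun i j =>
      iteratedDeriv n (fun z : ℝ => ψ z i j) 0 / (n.factorial : ℝ)) :
    ∀ n : ℕ,
      !![(n : ℝ) ^ 3 + 3 * (n : ℝ) ^ 2 - (n : ℝ) - 3, 0;
          0, (n : ℝ) * ((n : ℝ) ^ 2 + 3 * (n : ℝ) + 2)] * a (n + 3) +
        !![0, 3 * ((n : ℝ) - 1); 0, 0] * a (n + 1)
      = x ^ 3 • a n := by
  have haE : ∀ n : ℕ, a n =
      !![((-1)*x^n + (n:ℝ)*x*x^(n-1)) / n.factorial,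
         ((n:ℝ)*((n:ℝ)-1)*(-1)*x^(n-2)) / n.factorial;
         0, ((n:ℝ)*x*x^(n-1)) / n.factorial] := by
    intro n
    rw [ha]
    ext i j
    fin_cases i <;> fin_cases j <;>
      simp only [Fin.mk_zero, Fin.mk_one, Fin.isValue, Matrix.of_apply, Matrix.cons_val',
        Matrix.cons_val_zero, Matrix.cons_val_one,
        Matrix.head_cons, Matrix.head_fin_const, Matrix.empty_val', Matrix.cons_val_fin_one]
    · have hf : (fun z : ℝ => ψ z 0 0)
          = fun z : ℝ => Real.exp (x*z) * ((-1) + x*z + 0*z^2) := by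
        funext z; rw [hψ]; first | (simp; ring) | simp
      rw [hf, key]; ring_nf
    · have hf : (fun z : ℝ => ψ z 0 1)
          = fun z : ℝ => Real.exp (x*z) * (0 + 0*z + (-1)*z^2) := by
        funext z; rw [hψ]; first | (simp; ring) | simp
      rw [hf, key]; ring_nf
    · have hf : (fun z : ℝ => ψ z 1 0)
          = fun z : ℝ => Real.exp (x*z) * (0 + 0*z + 0*z^2) := by
        funext z; rw [hψ]; simp
      rw [hf, key]; ring_nf
    · have hf : (fun z : ℝ => ψ z 1 1)
          = fun z : ℝ => Real.exp (x*z) * (0 + x*z + 0*z^2) := by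
        funext z; rw [hψ]; first | (simp; ring) | simp
      rw [hf, key]; ring_nf
  intro n
  rw [haE, haE, haE]
  have h3 : ((n+3).factorial : ℝ) = ((n:ℝ)+3)*((n:ℝ)+2)*((n:ℝ)+1)*(n.factorial : ℝ) := by
    push_cast [Nat.factorial_succ]; ring
  have h1 : ((n+1).factorial : ℝ) = ((n:ℝ)+1)*(n.factorial : ℝ) := by
    push_cast [Nat.factorial_succ]; ring
  have hfac : (n.factorial : ℝ) ≠ 0 := by positivity
  ext i j
  fin_cases i <;> fin_cases j <;>
    · simp only [Matrix.add_apply, Matrix.mul_apply, Matrix.smul_apply, Fin.sum_univ_two,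
        Matrix.cons_val', Matrix.cons_val_zero, Matrix.cons_val_one, Matrix.head_cons,
        Matrix.head_fin_const, Matrix.empty_val', Matrix.cons_val_fin_one, smul_eq_mul]
      rw [h3, h1]
      match n with
      | 0 => norm_num [Nat.factorial] <;> ring_nf <;> norm_num
      | 1 => norm_num [Nat.factorial] <;> ring_nf <;> norm_num
      | (k+2) =>
        have hk : (((k+2).factorial : ℝ)) ≠ 0 := by positivity
        simp only [Matrix.of_apply, Matrix.cons_val', Matrix.cons_val_zero, Matrix.cons_val_one,
          Matrix.head_cons, Matrix.empty_val', Matrix.cons_val_fin_one]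
        push_cast
        first | (field_simp; ring) | field_simp
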